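/- Let x > 1 and A = (1/(x+1)^3)·[[x^3,3x^2,3x,1],[x^2,x^3+2x,2x^2+1,x],[x,2x^2+1,x^3+2x,x^2],[1,3x,3x^2,x^3]]. Then A is invertible, and for any vector (t_0,t_1,t_2,t_3) = (u_0,u_1,u_2,u_3)·A, the linear combination (−t_0 + t_1·x − t_2·x^2 + t_3·x^3)/(x−1)^3 equals u_3. -/

import Mathlib

open Matrix

/-- For `x > 1`, the triplet transition matrix `A` is invertible, and whenever
`(t₀,t₁,t₂,t₃) = (u₀,u₁,u₂,u₃)·A`, the combination
`(-t₀ + t₁x - t₂x² + t₃x³)/(x-1)³` recovers `u₃` (the true triangle count). -/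
theorem triangle_count_debias (x : ℝ) (hx : 1 < x)
    (A : Matrix (Fin 4) (Fin 4) ℝ)
    (hA : A = (1 / (x + 1)^3) •
        !![x^3,   3*x^2,     3*x,       1;
           x^2,   x^3+2*x,   2*x^2+1,   x;
           x,     2*x^2+1,   x^3+2*x,   x^2;
           1,     3*x,       3*x^2,     x^3])
    (u t : Fin 4 → ℝ) (ht : t = u ᵥ* A) :
    IsUnit A ∧
    (-(t 0) + t 1 * x - t 2 * x^2 + t 3 * x^3) / (x - 1)^3 = u 3 := by
  have hx1 : (x + 1) ≠ 0 := by nlinarith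
  have hx2 : (x - 1) ≠ 0 := by nlinarith
  constructor
  · rw [Matrix.isUnit_iff_isUnit_det, isUnit_iff_ne_zero, hA, Matrix.det_smul]
    have hdet : (!![x ^ 3, 3 * x ^ 2, 3 * x, 1;
        x ^ 2, x ^ 3 + 2 * x, 2 * x ^ 2 + 1, x;
        x, 2 * x ^ 2 + 1, x ^ 3 + 2 * x, x ^ 2;
        1, 3 * x, 3 * x ^ 2, x ^ 3] : Matrix (Fin 4) (Fin 4) ℝ).det
        = (x - 1) ^ 6 * (x + 1) ^ 6 := by
      rw [Matrix.det_succ_row_zero]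
      simp (config := {decide := true}) [Fin.sum_univ_succ, Matrix.det_fin_three, Fin.succAbove]
      ring
    rw [hdet]
    positivity
  · subst hA ht
    simp only [Matrix.vecMul, dotProduct, Fin.sum_univ_four, Matrix.smul_apply, Matrix.of_apply,
      Matrix.cons_val', Matrix.cons_val_zero, Matrix.cons_val_one, Matrix.head_cons,
      Matrix.empty_val', Matrix.cons_val_fin_one, Matrix.head_fin_const,
      Matrix.cons_val_two, Matrix.tail_cons, Matrix.cons_val_three, smul_eq_mul]
    field_simp
    ring
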